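/- Let 𝔤 = A₅,₇(p,−p,−1) with de¹ = e¹⁵, de² = p·e²⁵, de³ = −p·e³⁵, de⁴ = −e⁴⁵, de⁵ = 0. Then the SU(2)-structure adapted to the coframe f¹=e¹, f²=e⁴, f³=e², f⁴=e³, f⁵=e⁵ is hypo: d(e¹⁴+e²³) = 0, d((e¹²+e³⁴)∧e⁵) = 0, d((e¹³+e⁴²)∧e⁵) = 0. -/
import Mathlib


open ExteriorAlgebra

/-- Basis `e¹,…,e⁵` of `𝔤*` (0-indexed: `e i` is `e^{i+1}`) inside `Λ*𝔤*`. -/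
noncomputable def e (i : Fin 5) : ExteriorAlgebra ℝ (Fin 5 → ℝ) := ι ℝ (Pi.single i 1)

lemma eswap (i j : Fin 5) : e i * e j = -(e j * e i) := by
  have := ι_add_mul_swap (R := ℝ) (Pi.single i (1:ℝ) : Fin 5 → ℝ) (Pi.single j 1)
  rw [e, e]
  exact eq_neg_of_add_eq_zero_left this

lemma esq (i : Fin 5) : e i * e i = 0 := ι_sq_zero _

lemma z44 (i j : Fin 5) : (e i * e 4) * (e j * e 4) = 0 := by
  calc (e i * e 4) * (e j * e 4) = e i * ((e 4 * e j) * e 4) := by noncomm_ring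
    _ = e i * ((-(e j * e 4)) * e 4) := by rw [eswap 4 j]
    _ = -(e i * e j * (e 4 * e 4)) := by noncomm_ring
    _ = 0 := by rw [esq]; simp

/-- on `A₅,₇(p,−p,−1)` with `de¹ = e¹⁵`, `de² = p·e²⁵`, `de³ = −p·e³⁵`,
`de⁴ = −e⁴⁵`, `de⁵ = 0`, the SU(2)-structure adapted to the coframe
`f¹=e¹, f²=e⁴, f³=e², f⁴=e³, f⁵=e⁵` is hypo:
`d(e¹⁴+e²³) = 0`, `d((e¹²+e³⁴)∧e⁵) = 0`, `d((e¹³+e⁴²)∧e⁵) = 0`. -/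
theorem stmt18 (p : ℝ)
    (d : ExteriorAlgebra ℝ (Fin 5 → ℝ) →ₗ[ℝ] ExteriorAlgebra ℝ (Fin 5 → ℝ))
    (hone : d 1 = 0)
    (hleib : ∀ (v : Fin 5 → ℝ) (x : ExteriorAlgebra ℝ (Fin 5 → ℝ)),
      d (ι ℝ v * x) = d (ι ℝ v) * x - ι ℝ v * d x)
    (h1 : d (e 0) = e 0 * e 4) (h2 : d (e 1) = p • (e 1 * e 4))
    (h3 : d (e 2) = -(p • (e 2 * e 4))) (h4 : d (e 3) = -(e 3 * e 4))
    (h5 : d (e 4) = 0) :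
    d (e 0 * e 3 + e 1 * e 2) = 0 ∧
    d ((e 0 * e 1 + e 2 * e 3) * e 4) = 0 ∧
    d ((e 0 * e 2 + e 3 * e 1) * e 4) = 0 := by
  have hleib' : ∀ (i : Fin 5) (x : ExteriorAlgebra ℝ (Fin 5 → ℝ)),
      d (e i * x) = d (e i) * x - e i * d x := fun i x => hleib _ x
  -- d(eᵢ * e4) = d eᵢ * e4 for all i
  have d14 : d (e 1 * e 4) = 0 := by
    rw [hleib' 1, h2, h5, mul_zero, sub_zero, smul_mul_assoc, mul_assoc, esq, mul_zero, smul_zero]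
  have d24 : d (e 2 * e 4) = 0 := by
    rw [hleib' 2, h3, h5, mul_zero, sub_zero, neg_mul, smul_mul_assoc, mul_assoc, esq,
      mul_zero, smul_zero, neg_zero]
  have d34 : d (e 3 * e 4) = 0 := by
    rw [hleib' 3, h4, h5, mul_zero, sub_zero, neg_mul, mul_assoc, esq, mul_zero, neg_zero]
  refine ⟨?_, ?_, ?_⟩
  · rw [map_add, hleib' 0, hleib' 1, h1, h2, h3, h4]
    have s43 : e 4 * e 3 = -(e 3 * e 4) := eswap 4 3
    have s42 : e 4 * e 2 = -(e 2 * e 4) := eswap 4 2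
    calc (e 0 * e 4 * e 3 - e 0 * -(e 3 * e 4)) +
          ((p • (e 1 * e 4)) * e 2 - e 1 * -(p • (e 2 * e 4)))
        = (e 0 * (e 4 * e 3) + e 0 * (e 3 * e 4)) +
          p • (e 1 * (e 4 * e 2) + e 1 * (e 2 * e 4)) := by
          simp only [smul_mul_assoc, mul_smul_comm, mul_assoc, smul_add]; noncomm_ring
      _ = 0 := by rw [s43, s42]; simp
  · rw [add_mul, map_add, mul_assoc, mul_assoc, hleib' 0, hleib' 2, d14, d34, mul_zero, sub_zero,
      mul_zero, sub_zero, h1, h3]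
    rw [z44 0 1, neg_mul, smul_mul_assoc, z44 2 3]
    simp
  · rw [add_mul, map_add, mul_assoc, mul_assoc, hleib' 0, hleib' 3, d24, d14, mul_zero, sub_zero,
      mul_zero, sub_zero, h1, h4]
    rw [z44 0 2, neg_mul, z44 3 1]
    simp
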